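/- There is a fixed number N (N = 7 works) such that every connected graph Γ admits a connected graph Γ⁺ with: (1) Aut(Γ⁺) ≅ Aut(Γ); (2) an edge coloring C : E(Γ⁺) → N such that for each color l < N, the subgraph formed by edges of color l is a disjoint union of stars; (3) every automorphism of Γ⁺ preserves the coloring; and (4) |V(Γ)| ≤ |V(Γ⁺)| ≤ |V(Γ)| + 4|E(Γ)|. -/

import Mathlib

/-- A graph is a disjoint union of stars: there is a set `c` of centers such that every
edge joins a center to a non-center, and every non-center vertex has at most one
neighbor. -/
def IsStarForest {V : Type*} (G : SimpleGraph V) : Prop :=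
  ∃ c : Set V, (∀ ⦃v w⦄, G.Adj v w → (v ∈ c ↔ w ∉ c)) ∧
    ∀ v, v ∉ c → (G.neighborSet v).Subsingleton

/-- The subgraph of `G` formed by the edges of color `l` under the edge-coloring `C`. -/
def colorSubgraph {V : Type*} (G : SimpleGraph V) {N : ℕ} (C : Sym2 V → Fin N)
    (l : Fin N) : SimpleGraph V where
  Adj v w := G.Adj v w ∧ C s(v, w) = l
  symm := by
    constructor
    intro v w h
    exact ⟨h.1.symm, by rw [Sym2.eq_swap]; exact h.2⟩
  loopless := by constructor; intro v h; exact G.irrefl h.1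

open SimpleGraph

universe u
namespace StarAux
variable {V : Type u} (Γ : SimpleGraph V)

abbrev W := V ⊕ (Γ.Dart ⊕ (Γ.edgeSet ⊕ Γ.edgeSet))

variable {Γ}
abbrev pO (x : V) : W Γ := Sum.inl x
abbrev pP (d : Γ.Dart) : W Γ := Sum.inr (Sum.inl d)
abbrev pM (e : Γ.edgeSet) : W Γ := Sum.inr (Sum.inr (Sum.inl e))
abbrev pD (e : Γ.edgeSet) : W Γ := Sum.inr (Sum.inr (Sum.inr e))
variable (Γ)

def aux : W Γ → W Γ → Prop
  | Sum.inl x, Sum.inr (Sum.inl d) => d.fst = x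
  | Sum.inr (Sum.inl d), Sum.inr (Sum.inr (Sum.inl e)) => d.edge = (e : Sym2 V)
  | Sum.inr (Sum.inr (Sum.inl e)), Sum.inr (Sum.inr (Sum.inr e')) => e = e'
  | _, _ => False

def G' : SimpleGraph (W Γ) where
  Adj v w := aux Γ v w ∨ aux Γ w v
  symm := ⟨fun v w h => h.symm⟩
  loopless := ⟨by
    rintro (x | d | e | e) h <;> exact h.elim (fun h => h) (fun h => h)⟩

variable {Γ}

lemma adj_pO_iff {x : V} {w : W Γ} : (G' Γ).Adj (pO x) w ↔ ∃ d : Γ.Dart, w = pP d ∧ d.fst = x := by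
  constructor
  · rintro (h | h)
    · rcases w with y | d | e | e
      · exact h.elim
      · exact ⟨d, rfl, h⟩
      · exact h.elim
      · exact h.elim
    · rcases w with y | d | e | e <;> exact h.elim
  · rintro ⟨d, rfl, h⟩; exact Or.inl h

lemma adj_pP_iff {d : Γ.Dart} {w : W Γ} :
    (G' Γ).Adj (pP d) w ↔ (w = pO d.fst ∨ w = pM ⟨d.edge, d.edge_mem⟩) := by
  constructor
  · rintro (h | h)
    · rcases w with y | d' | e | e
      · exact h.elim
      · exact h.elim
      · exact Or.inr (by cases e with | mk e he => cases h; rfl)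
      · exact h.elim
    · rcases w with y | d' | e | e
      · exact Or.inl (by cases h; rfl)
      · exact h.elim
      · exact h.elim
      · exact h.elim
  · rintro (rfl | rfl)
    · exact Or.inr rfl
    · exact Or.inl rfl

lemma adj_pM_iff {e : Γ.edgeSet} {w : W Γ} :
    (G' Γ).Adj (pM e) w ↔ ((∃ d : Γ.Dart, w = pP d ∧ d.edge = (e : Sym2 V)) ∨ w = pD e) := by
  constructor
  · rintro (h | h)
    · rcases w with y | d' | e' | e'
      · exact h.elim
      · exact h.elim
      · exact h.elim
      · exact Or.inr (by cases h; rfl)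
    · rcases w with y | d' | e' | e'
      · exact h.elim
      · exact Or.inl ⟨d', rfl, h⟩
      · exact h.elim
      · exact h.elim
  · rintro (⟨d, rfl, h⟩ | rfl)
    · exact Or.inr h
    · exact Or.inl rfl

lemma adj_pD_iff {e : Γ.edgeSet} {w : W Γ} : (G' Γ).Adj (pD e) w ↔ w = pM e := by
  constructor
  · rintro (h | h)
    · rcases w with y | d' | e' | e' <;> exact h.elim
    · rcases w with y | d' | e' | e'
      · exact h.elim
      · exact h.elim
      · cases h; rfl
      · exact h.elim
  · rintro rfl; exact Or.inr rfl

lemma exists_dart (e : Γ.edgeSet) : ∃ d : Γ.Dart, d.edge = (e : Sym2 V) := by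
  obtain ⟨e, he⟩ := e
  induction e with
  | _ x y => exact ⟨⟨(x, y), he⟩, rfl⟩


section Classes
variable {α : Type*} {β : Type*}

def DegOne (G : SimpleGraph α) (v : α) : Prop := ∃ a, G.neighborSet v = {a}
def DegTwo (G : SimpleGraph α) (v : α) : Prop := ∃ a b, a ≠ b ∧ G.neighborSet v = {a, b}
def DegThree (G : SimpleGraph α) (v : α) : Prop :=
  ∃ a b c, a ≠ b ∧ a ≠ c ∧ b ≠ c ∧ G.neighborSet v = {a, b, c}

def MC (G : SimpleGraph α) (v : α) : Prop := DegThree G v ∧ ∃ w ∈ G.neighborSet v, DegOne G w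
def PC (G : SimpleGraph α) (v : α) : Prop := DegTwo G v ∧ ∃ w ∈ G.neighborSet v, MC G w
def DC (G : SimpleGraph α) (v : α) : Prop := DegOne G v ∧ ∃ w ∈ G.neighborSet v, MC G w

variable {G : SimpleGraph α} {H : SimpleGraph β}

lemma iso_neighborSet (φ : G ≃g H) (v : α) :
    H.neighborSet (φ v) = φ '' G.neighborSet v := by
  ext w
  simp only [mem_neighborSet, Set.mem_image]
  constructor
  · intro h
    refine ⟨φ.symm w, ?_, by simp⟩
    have h2 : H.Adj (φ v) (φ (φ.symm w)) := by simpa using h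
    exact φ.map_adj_iff.1 h2
  · rintro ⟨u, hu, rfl⟩
    exact φ.map_adj_iff.2 hu

lemma degOne_map (φ : G ≃g H) {v : α} (h : DegOne G v) : DegOne H (φ v) := by
  obtain ⟨a, ha⟩ := h
  exact ⟨φ a, by rw [iso_neighborSet, ha, Set.image_singleton]⟩

lemma degTwo_map (φ : G ≃g H) {v : α} (h : DegTwo G v) : DegTwo H (φ v) := by
  obtain ⟨a, b, hab, ha⟩ := h
  refine ⟨φ a, φ b, fun hc => hab (φ.injective hc), ?_⟩
  rw [iso_neighborSet, ha, Set.image_insert_eq, Set.image_singleton]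

lemma degThree_map (φ : G ≃g H) {v : α} (h : DegThree G v) : DegThree H (φ v) := by
  obtain ⟨a, b, c, h1, h2, h3, ha⟩ := h
  refine ⟨φ a, φ b, φ c, fun hc => h1 (φ.injective hc), fun hc => h2 (φ.injective hc),
    fun hc => h3 (φ.injective hc), ?_⟩
  rw [iso_neighborSet, ha, Set.image_insert_eq, Set.image_insert_eq, Set.image_singleton]

lemma mc_map (φ : G ≃g H) {v : α} (h : MC G v) : MC H (φ v) := by
  obtain ⟨h1, w, hw, h2⟩ := h
  exact ⟨degThree_map φ h1, φ w, by rw [iso_neighborSet]; exact ⟨w, hw, rfl⟩, degOne_map φ h2⟩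

lemma pc_map (φ : G ≃g H) {v : α} (h : PC G v) : PC H (φ v) := by
  obtain ⟨h1, w, hw, h2⟩ := h
  exact ⟨degTwo_map φ h1, φ w, by rw [iso_neighborSet]; exact ⟨w, hw, rfl⟩, mc_map φ h2⟩

lemma dc_map (φ : G ≃g H) {v : α} (h : DC G v) : DC H (φ v) := by
  obtain ⟨h1, w, hw, h2⟩ := h
  exact ⟨degOne_map φ h1, φ w, by rw [iso_neighborSet]; exact ⟨w, hw, rfl⟩, mc_map φ h2⟩

lemma mc_map_iff (φ : G ≃g H) {v : α} : MC H (φ v) ↔ MC G v :=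
  ⟨fun h => by simpa using mc_map φ.symm h, mc_map φ⟩
lemma pc_map_iff (φ : G ≃g H) {v : α} : PC H (φ v) ↔ PC G v :=
  ⟨fun h => by simpa using pc_map φ.symm h, pc_map φ⟩
lemma dc_map_iff (φ : G ≃g H) {v : α} : DC H (φ v) ↔ DC G v :=
  ⟨fun h => by simpa using dc_map φ.symm h, dc_map φ⟩

-- helpers about impossibility
lemma not_degOne_of_pair {v a b : α} (hab : a ≠ b) (h : G.neighborSet v = {a, b}) :
    ¬ DegOne G v := by
  rintro ⟨c, hc⟩
  rw [h] at hc
  have ha : a ∈ ({c} : Set α) := hc ▸ (by simp : a ∈ ({a, b} : Set α))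
  have hb : b ∈ ({c} : Set α) := hc ▸ (by simp : b ∈ ({a, b} : Set α))
  exact hab (ha.trans hb.symm)

lemma not_degTwo_of_single {v a : α} (h : G.neighborSet v = {a}) : ¬ DegTwo G v := by
  rintro ⟨b, c, hbc, hb⟩
  rw [h] at hb
  have h1 : b ∈ ({a} : Set α) := hb ▸ (by simp : b ∈ ({b, c} : Set α))
  have h2 : c ∈ ({a} : Set α) := hb ▸ (by simp : c ∈ ({b, c} : Set α))
  exact hbc (h1.trans h2.symm)

lemma not_degThree_of_single {v a : α} (h : G.neighborSet v = {a}) : ¬ DegThree G v := by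
  rintro ⟨b, c, d, h1, _, _, hb⟩
  rw [h] at hb
  have hb1 : b ∈ ({a} : Set α) := hb ▸ (by simp : b ∈ ({b, c, d} : Set α))
  have hc1 : c ∈ ({a} : Set α) := hb ▸ (by simp : c ∈ ({b, c, d} : Set α))
  exact h1 (hb1.trans hc1.symm)

lemma not_degOne_of_triple {v a b c : α} (hab : a ≠ b) (h : G.neighborSet v = {a, b, c}) :
    ¬ DegOne G v := by
  rintro ⟨d, hd⟩
  rw [h] at hd
  have h1 : a ∈ ({d} : Set α) := hd ▸ (by simp : a ∈ ({a, b, c} : Set α))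
  have h2 : b ∈ ({d} : Set α) := hd ▸ (by simp : b ∈ ({a, b, c} : Set α))
  exact hab (h1.trans h2.symm)

lemma not_degTwo_of_triple {v a b c : α} (h1 : a ≠ b) (h2 : a ≠ c) (h3 : b ≠ c)
    (h : G.neighborSet v = {a, b, c}) : ¬ DegTwo G v := by
  rintro ⟨u, w, huw, hu⟩
  rw [h] at hu
  have ha : a ∈ ({u, w} : Set α) := hu ▸ (by simp : a ∈ ({a, b, c} : Set α))
  have hb : b ∈ ({u, w} : Set α) := hu ▸ (by simp : b ∈ ({a, b, c} : Set α))
  have hc : c ∈ ({u, w} : Set α) := hu ▸ (by simp : c ∈ ({a, b, c} : Set α))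
  simp only [Set.mem_insert_iff, Set.mem_singleton_iff] at ha hb hc
  rcases ha with ha | ha <;> rcases hb with hb | hb <;> rcases hc with hc | hc <;>
    first
    | exact h1 (ha.trans hb.symm)
    | exact h2 (ha.trans hc.symm)
    | exact h3 (hb.trans hc.symm)

lemma not_degThree_of_pair {v a b : α} (h : G.neighborSet v = {a, b}) : ¬ DegThree G v := by
  rintro ⟨u, w, z, h1, h2, h3, hu⟩
  rw [h] at hu
  have ha : u ∈ ({a, b} : Set α) := hu ▸ (by simp : u ∈ ({u, w, z} : Set α))
  have hb : w ∈ ({a, b} : Set α) := hu ▸ (by simp : w ∈ ({u, w, z} : Set α))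
  have hc : z ∈ ({a, b} : Set α) := hu ▸ (by simp : z ∈ ({u, w, z} : Set α))
  simp only [Set.mem_insert_iff, Set.mem_singleton_iff] at ha hb hc
  rcases ha with ha | ha <;> rcases hb with hb | hb <;> rcases hc with hc | hc <;>
    first
    | exact h1 (ha.trans hb.symm)
    | exact h2 (ha.trans hc.symm)
    | exact h3 (hb.trans hc.symm)


end Classes

lemma nbhd_pP (d : Γ.Dart) :
    (G' Γ).neighborSet (pP d) = {pO d.fst, pM ⟨d.edge, d.edge_mem⟩} := by
  ext w
  simp only [mem_neighborSet, adj_pP_iff, Set.mem_insert_iff, Set.mem_singleton_iff]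

lemma nbhd_pD (e : Γ.edgeSet) : (G' Γ).neighborSet (pD e) = {pM e} := by
  ext w
  simp only [mem_neighborSet, adj_pD_iff, Set.mem_singleton_iff]

lemma nbhd_pM {e : Γ.edgeSet} {d : Γ.Dart} (hd : d.edge = (e : Sym2 V)) :
    (G' Γ).neighborSet (pM e) = {pP d, pP d.symm, pD e} := by
  ext w
  simp only [mem_neighborSet, adj_pM_iff, Set.mem_insert_iff, Set.mem_singleton_iff]
  constructor
  · rintro (⟨d', rfl, hd'⟩ | rfl)
    · have : d'.edge = d.edge := by rw [hd', hd]
      rcases (dart_edge_eq_iff d' d).1 this with rfl | rfl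
      · exact Or.inl rfl
      · exact Or.inr (Or.inl rfl)
    · exact Or.inr (Or.inr rfl)
  · rintro (rfl | rfl | rfl)
    · exact Or.inl ⟨d, rfl, hd⟩
    · exact Or.inl ⟨d.symm, rfl, by rw [Dart.edge_symm, hd]⟩
    · exact Or.inr rfl

lemma degOne_pD (e : Γ.edgeSet) : DegOne (G' Γ) (pD e) := ⟨pM e, nbhd_pD e⟩

lemma degTwo_pP (d : Γ.Dart) : DegTwo (G' Γ) (pP d) :=
  ⟨pO d.fst, pM ⟨d.edge, d.edge_mem⟩, by simp, nbhd_pP d⟩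

lemma degThree_pM (e : Γ.edgeSet) : DegThree (G' Γ) (pM e) := by
  obtain ⟨d, hd⟩ := exists_dart e
  refine ⟨pP d, pP d.symm, pD e, ?_, by simp, by simp, nbhd_pM hd⟩
  simp only [ne_eq, Sum.inr.injEq, Sum.inl.injEq]
  exact fun h => d.symm_ne h.symm

lemma mc_pM (e : Γ.edgeSet) : MC (G' Γ) (pM e) := by
  refine ⟨degThree_pM e, pD e, ?_, degOne_pD e⟩
  exact (adj_pM_iff).2 (Or.inr rfl)

-- vertices that are NOT in classes
lemma not_degOne_pP (d : Γ.Dart) : ¬ DegOne (G' Γ) (pP d) :=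
  not_degOne_of_pair (by simp) (nbhd_pP d)

lemma not_degThree_pP (d : Γ.Dart) : ¬ DegThree (G' Γ) (pP d) :=
  not_degThree_of_pair (nbhd_pP d)

lemma not_degTwo_pD (e : Γ.edgeSet) : ¬ DegTwo (G' Γ) (pD e) :=
  not_degTwo_of_single (nbhd_pD e)

lemma not_degThree_pD (e : Γ.edgeSet) : ¬ DegThree (G' Γ) (pD e) :=
  not_degThree_of_single (nbhd_pD e)

lemma not_degOne_pM (e : Γ.edgeSet) : ¬ DegOne (G' Γ) (pM e) := by
  obtain ⟨d, hd⟩ := exists_dart e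
  refine not_degOne_of_triple ?_ (nbhd_pM hd)
  simp only [ne_eq, Sum.inr.injEq, Sum.inl.injEq]
  exact fun h => d.symm_ne h.symm

lemma not_degTwo_pM (e : Γ.edgeSet) : ¬ DegTwo (G' Γ) (pM e) := by
  obtain ⟨d, hd⟩ := exists_dart e
  refine not_degTwo_of_triple ?_ (by simp) (by simp) (nbhd_pM hd)
  simp only [ne_eq, Sum.inr.injEq, Sum.inl.injEq]
  exact fun h => d.symm_ne h.symm

-- pO has no DegOne neighbor and no MC-neighbor
lemma not_mc_pO (x : V) : ¬ MC (G' Γ) (pO x) := by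
  rintro ⟨-, w, hw, hone⟩
  rw [mem_neighborSet, adj_pO_iff] at hw
  obtain ⟨d, rfl, -⟩ := hw
  exact not_degOne_pP d hone

lemma mc_iff {v : W Γ} : MC (G' Γ) v ↔ ∃ e, v = pM e := by
  constructor
  · rintro h
    rcases v with x | d | e | e
    · exact absurd h (not_mc_pO x)
    · exact absurd h.1 (not_degThree_pP d)
    · exact ⟨e, rfl⟩
    · exact absurd h.1 (not_degThree_pD e)
  · rintro ⟨e, rfl⟩; exact mc_pM e

lemma no_mc_neighbor_pO (x : V) : ¬ ∃ w ∈ (G' Γ).neighborSet (pO x), MC (G' Γ) w := by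
  rintro ⟨w, hw, hmc⟩
  rw [mem_neighborSet, adj_pO_iff] at hw
  obtain ⟨d, rfl, -⟩ := hw
  obtain ⟨e, he⟩ := mc_iff.1 hmc
  exact absurd he (by simp)

lemma pc_iff {v : W Γ} : PC (G' Γ) v ↔ ∃ d, v = pP d := by
  constructor
  · rintro ⟨hdeg, hn⟩
    rcases v with x | d | e | e
    · exact absurd hn (no_mc_neighbor_pO x)
    · exact ⟨d, rfl⟩
    · exact absurd hdeg (not_degTwo_pM e)
    · exact absurd hdeg (not_degTwo_pD e)
  · rintro ⟨d, rfl⟩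
    exact ⟨degTwo_pP d, pM ⟨d.edge, d.edge_mem⟩, (adj_pP_iff).2 (Or.inr rfl),
      mc_pM _⟩

lemma dc_iff {v : W Γ} : DC (G' Γ) v ↔ ∃ e, v = pD e := by
  constructor
  · rintro ⟨hdeg, hn⟩
    rcases v with x | d | e | e
    · exact absurd hn (no_mc_neighbor_pO x)
    · exact absurd hdeg (not_degOne_pP d)
    · exact absurd hdeg (not_degOne_pM e)
    · exact ⟨e, rfl⟩
  · rintro ⟨e, rfl⟩
    exact ⟨degOne_pD e, pM e, (adj_pD_iff).2 rfl, mc_pM e⟩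

lemma oc_iff {v : W Γ} :
    (¬ MC (G' Γ) v ∧ ¬ PC (G' Γ) v ∧ ¬ DC (G' Γ) v) ↔ ∃ x, v = pO x := by
  constructor
  · rintro ⟨hm, hp, hd⟩
    rcases v with x | d | e | e
    · exact ⟨x, rfl⟩
    · exact absurd (pc_iff.2 ⟨d, rfl⟩) hp
    · exact absurd (mc_iff.2 ⟨e, rfl⟩) hm
    · exact absurd (dc_iff.2 ⟨e, rfl⟩) hd
  · rintro ⟨x, rfl⟩
    refine ⟨not_mc_pO x, fun h => ?_, fun h => ?_⟩
    · obtain ⟨d, hd⟩ := pc_iff.1 h; exact absurd hd (by simp)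
    · obtain ⟨e, he⟩ := dc_iff.1 h; exact absurd he (by simp)


section Aut
variable {V : Type u} {Γ : SimpleGraph V}

lemma phi_pO_ex (φ : G' Γ ≃g G' Γ) (x : V) : ∃ y, φ (pO x) = pO y := by
  refine oc_iff.1 ⟨?_, ?_, ?_⟩
  · rw [mc_map_iff]; exact (oc_iff.2 ⟨x, rfl⟩).1
  · rw [pc_map_iff]; exact (oc_iff.2 ⟨x, rfl⟩).2.1
  · rw [dc_map_iff]; exact (oc_iff.2 ⟨x, rfl⟩).2.2

noncomputable def down (φ : G' Γ ≃g G' Γ) (x : V) : V := (phi_pO_ex φ x).choose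

lemma down_spec (φ : G' Γ ≃g G' Γ) (x : V) : φ (pO x) = pO (down φ x) :=
  (phi_pO_ex φ x).choose_spec

lemma down_symm_down (φ : G' Γ ≃g G' Γ) (x : V) : down φ.symm (down φ x) = x := by
  have h1 := down_spec φ x
  have h2 := down_spec φ.symm (down φ x)
  rw [← h1] at h2
  simp only [RelIso.symm_apply_apply] at h2
  exact Sum.inl_injective h2.symm

/-- characterization of Γ-adjacency inside `G' Γ`. -/
lemma adj_iff_chain {x y : V} :
    Γ.Adj x y ↔ ∃ a b c : W Γ, MC (G' Γ) b ∧ (G' Γ).Adj (pO x) a ∧ (G' Γ).Adj a b ∧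
      (G' Γ).Adj b c ∧ (G' Γ).Adj c (pO y) ∧ a ≠ c := by
  constructor
  · intro h
    refine ⟨pP ⟨(x, y), h⟩, pM ⟨s(x, y), h⟩, pP ⟨(y, x), h.symm⟩,
      mc_pM _, adj_pO_iff.2 ⟨_, rfl, rfl⟩, ?_, ?_, ?_, ?_⟩
    · exact Or.inl rfl
    · exact Or.inr (by show s(y, x) = s(x, y); rw [Sym2.eq_swap])
    · exact ((G' Γ).adj_symm (adj_pO_iff.2 ⟨_, rfl, rfl⟩))
    · simp only [ne_eq, Sum.inr.injEq, Sum.inl.injEq, Dart.mk.injEq, Prod.mk.injEq]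
      rintro ⟨rfl, -⟩
      exact Γ.irrefl h
  · rintro ⟨a, b, c, hb, h1, h2, h3, h4, hac⟩
    obtain ⟨e, rfl⟩ := mc_iff.1 hb
    obtain ⟨d, rfl, hdx⟩ := adj_pO_iff.1 h1
    obtain ⟨d', rfl, hdy⟩ := adj_pO_iff.1 ((G' Γ).adj_symm h4)
    have hde : d.edge = (e : Sym2 V) := by
      rcases adj_pP_iff.1 h2 with h | h
      · exact absurd h (by simp)
      · cases h; rfl
    have hde' : d'.edge = (e : Sym2 V) := by
      rcases adj_pP_iff.1 ((G' Γ).adj_symm h3) with h | h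
      · exact absurd h (by simp)
      · cases h; rfl
    have hdd : d ≠ d' := fun h => hac (by rw [h])
    rcases (dart_edge_eq_iff d d').1 (by rw [hde, hde']) with h | h
    · exact absurd h hdd
    · have : d.fst = d'.snd := by rw [h]; rfl
      have hsnd : d.snd = d'.fst := by rw [h]; rfl
      have := d.adj
      rw [hdx] at this
      rw [hsnd, hdy] at this
      exact this

lemma down_adj (φ : G' Γ ≃g G' Γ) {x y : V} (h : Γ.Adj x y) :
    Γ.Adj (down φ x) (down φ y) := by
  obtain ⟨a, b, c, hb, h1, h2, h3, h4, hac⟩ := adj_iff_chain.1 h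
  refine adj_iff_chain.2 ⟨φ a, φ b, φ c, ?_, ?_, ?_, ?_, ?_, ?_⟩
  · exact (mc_map_iff φ).2 hb
  · rw [← down_spec]; exact φ.map_adj_iff.2 h1
  · exact φ.map_adj_iff.2 h2
  · exact φ.map_adj_iff.2 h3
  · rw [← down_spec]; exact φ.map_adj_iff.2 h4
  · exact fun hh => hac (φ.injective hh)

/-- the restriction of an automorphism of `G' Γ` to the original vertices. -/
noncomputable def R (φ : G' Γ ≃g G' Γ) : Γ ≃g Γ where
  toFun := down φ
  invFun := down φ.symm
  left_inv := down_symm_down φ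
  right_inv := fun x => by
    have := down_symm_down φ.symm x
    simpa using this
  map_rel_iff' := by
    intro x y
    show Γ.Adj (down φ x) (down φ y) ↔ Γ.Adj x y
    constructor
    · intro h
      have h2 := down_adj φ.symm h
      rwa [down_symm_down, down_symm_down] at h2
    · exact down_adj φ

lemma R_apply (φ : G' Γ ≃g G' Γ) (x : V) : R φ x = down φ x := rfl

end Aut

section Up
variable {V : Type u} {Γ : SimpleGraph V}

def dartMap (ψ : Γ ≃g Γ) (d : Γ.Dart) : Γ.Dart :=
  ⟨(ψ d.fst, ψ d.snd), ψ.map_adj_iff.2 d.adj⟩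

lemma dartMap_edge (ψ : Γ ≃g Γ) (d : Γ.Dart) :
    (dartMap ψ d).edge = Sym2.map ψ d.edge := by
  rcases d with ⟨⟨a, b⟩, h⟩
  exact (Sym2.map_pair_eq ψ a b).symm

lemma dartMap_comp (ψ ψ' : Γ ≃g Γ) (d : Γ.Dart) :
    dartMap ψ' (dartMap ψ d) = dartMap (ψ.trans ψ') d := rfl

lemma dartMap_symm (ψ : Γ ≃g Γ) (d : Γ.Dart) : dartMap ψ.symm (dartMap ψ d) = d := by
  apply Dart.ext
  show (ψ.symm (ψ d.fst), ψ.symm (ψ d.snd)) = d.toProd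
  simp

lemma mapEdgeSet_symm (ψ : Γ ≃g Γ) (e : Γ.edgeSet) :
    ψ.symm.mapEdgeSet (ψ.mapEdgeSet e) = e := by
  apply Subtype.ext
  show Sym2.map ψ.symm (Sym2.map ψ (e : Sym2 V)) = (e : Sym2 V)
  rw [Sym2.map_map]
  have : (⇑ψ.symm ∘ ⇑ψ) = id := funext fun a => ψ.symm_apply_apply a
  rw [this, Sym2.map_id, id_eq]

def up (ψ : Γ ≃g Γ) : W Γ → W Γ :=
  Sum.map ψ (Sum.map (dartMap ψ) (Sum.map ψ.mapEdgeSet ψ.mapEdgeSet))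

lemma up_pO (ψ : Γ ≃g Γ) (x : V) : up ψ (pO x) = pO (ψ x) := rfl
lemma up_pP (ψ : Γ ≃g Γ) (d : Γ.Dart) : up ψ (pP d) = pP (dartMap ψ d) := rfl
lemma up_pM (ψ : Γ ≃g Γ) (e : Γ.edgeSet) : up ψ (pM e) = pM (ψ.mapEdgeSet e) := rfl
lemma up_pD (ψ : Γ ≃g Γ) (e : Γ.edgeSet) : up ψ (pD e) = pD (ψ.mapEdgeSet e) := rfl

lemma up_symm_up (ψ : Γ ≃g Γ) (w : W Γ) : up ψ.symm (up ψ w) = w := by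
  rcases w with x | d | e | e
  · simp [up_pO]
  · rw [up_pP, up_pP, dartMap_symm]
  · rw [up_pM, up_pM, mapEdgeSet_symm]
  · rw [up_pD, up_pD, mapEdgeSet_symm]

lemma up_aux_iff (ψ : Γ ≃g Γ) (v w : W Γ) : aux Γ (up ψ v) (up ψ w) ↔ aux Γ v w := by
  rcases v with x | d | e | e <;> rcases w with y | d' | e' | e'
  case inl.inr.inl =>
    show ψ d'.fst = ψ x ↔ d'.fst = x
    exact ⟨fun h => ψ.injective h, fun h => congrArg ψ h⟩
  case inr.inl.inr.inr.inl =>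
    show (dartMap ψ d).edge = (ψ.mapEdgeSet e' : Sym2 V) ↔ d.edge = (e' : Sym2 V)
    rw [dartMap_edge]
    show Sym2.map ψ d.edge = Sym2.map ψ (e' : Sym2 V) ↔ _
    exact ⟨fun h => Sym2.map.injective ψ.injective h, fun h => congrArg _ h⟩
  case inr.inr.inl.inr.inr.inr =>
    show ψ.mapEdgeSet e = ψ.mapEdgeSet e' ↔ e = e'
    exact ψ.mapEdgeSet.apply_eq_iff_eq
  all_goals exact Iff.rfl

/-- the extension of an automorphism of `Γ` to `G' Γ`. -/
def upIso (ψ : Γ ≃g Γ) : G' Γ ≃g G' Γ where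
  toFun := up ψ
  invFun := up ψ.symm
  left_inv := up_symm_up ψ
  right_inv := fun w => by have := up_symm_up ψ.symm w; simpa using this
  map_rel_iff' := by
    intro v w
    show (G' Γ).Adj (up ψ v) (up ψ w) ↔ (G' Γ).Adj v w
    exact or_congr (up_aux_iff ψ v w) (up_aux_iff ψ w v)

end Up

section Det
variable {V : Type u} {Γ : SimpleGraph V}

lemma phi_pP (φ : G' Γ ≃g G' Γ) (d : Γ.Dart) :
    φ (pP d) = pP (dartMap (R φ) d) := by
  obtain ⟨d', hd'⟩ := pc_iff.1 ((pc_map_iff φ).2 (pc_iff.2 ⟨d, rfl⟩))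
  obtain ⟨d'', hd''⟩ := pc_iff.1 ((pc_map_iff φ).2 (pc_iff.2 ⟨d.symm, rfl⟩))
  obtain ⟨e', he'⟩ := mc_iff.1 ((mc_map_iff φ).2 (mc_pM ⟨d.edge, d.edge_mem⟩))
  have hfst : d'.fst = down φ d.fst := by
    have h2 := φ.map_adj_iff.2 (Or.inl rfl : (G' Γ).Adj (pO d.fst) (pP d))
    rw [down_spec, hd'] at h2
    obtain ⟨d₃, h3, h4⟩ := adj_pO_iff.1 h2
    have : d' = d₃ := by simpa using h3
    rw [this]; exact h4
  have hfst'' : d''.fst = down φ d.snd := by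
    have h2 := φ.map_adj_iff.2 (Or.inl rfl : (G' Γ).Adj (pO d.symm.fst) (pP d.symm))
    rw [down_spec, hd''] at h2
    obtain ⟨d₃, h3, h4⟩ := adj_pO_iff.1 h2
    have : d'' = d₃ := by simpa using h3
    rw [this, h4]; rfl
  have hedge : d'.edge = (e' : Sym2 V) := by
    have h2 := φ.map_adj_iff.2
      (Or.inl rfl : (G' Γ).Adj (pP d) (pM ⟨d.edge, d.edge_mem⟩))
    rw [hd', he'] at h2
    rcases adj_pP_iff.1 h2 with h | h
    · exact absurd h (by simp)
    · have : e' = ⟨d'.edge, d'.edge_mem⟩ := by simpa using h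
      rw [this]
  have hedge'' : d''.edge = (e' : Sym2 V) := by
    have h2 := φ.map_adj_iff.2
      (Or.inl d.edge_symm : (G' Γ).Adj (pP d.symm) (pM ⟨d.edge, d.edge_mem⟩))
    rw [hd'', he'] at h2
    rcases adj_pP_iff.1 h2 with h | h
    · exact absurd h (by simp)
    · have : e' = ⟨d''.edge, d''.edge_mem⟩ := by simpa using h
      rw [this]
  have hne : d' ≠ d'' := by
    intro h
    have : φ (pP d) = φ (pP d.symm) := by rw [hd', hd'', h]
    have h5 : d = d.symm := by simpa using φ.injective this
    exact d.symm_ne h5.symm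
  have hsnd : d'.snd = down φ d.snd := by
    rcases (dart_edge_eq_iff d'' d').1 (hedge''.trans hedge.symm) with h | h
    · exact absurd h.symm hne
    · have : d''.fst = d'.snd := by rw [h]; rfl
      rw [← this, hfst'']
  rw [hd']
  congr 1
  exact Dart.ext _ _ (Prod.ext hfst hsnd)

lemma phi_pM (φ : G' Γ ≃g G' Γ) (e : Γ.edgeSet) :
    φ (pM e) = pM ((R φ).mapEdgeSet e) := by
  obtain ⟨e', he'⟩ := mc_iff.1 ((mc_map_iff φ).2 (mc_pM e))
  obtain ⟨d, hd⟩ := exists_dart e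
  have h2 := φ.map_adj_iff.2 (Or.inl hd : (G' Γ).Adj (pP d) (pM e))
  rw [phi_pP, he'] at h2
  rcases adj_pP_iff.1 h2 with h | h
  · exact absurd h (by simp)
  · have h5 : e' = ⟨(dartMap (R φ) d).edge, (dartMap (R φ) d).edge_mem⟩ := by simpa using h
    rw [he', h5]
    congr 1
    apply Subtype.ext
    show (dartMap (R φ) d).edge = Sym2.map (R φ) (e : Sym2 V)
    rw [dartMap_edge, hd]

lemma phi_pD (φ : G' Γ ≃g G' Γ) (e : Γ.edgeSet) :
    φ (pD e) = pD ((R φ).mapEdgeSet e) := by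
  obtain ⟨e₂, he₂⟩ := dc_iff.1 ((dc_map_iff φ).2 (dc_iff.2 ⟨e, rfl⟩))
  have h2 := φ.map_adj_iff.2 (Or.inl rfl : (G' Γ).Adj (pM e) (pD e))
  rw [phi_pM, he₂] at h2
  rcases adj_pM_iff.1 h2 with ⟨d, h, -⟩ | h
  · exact absurd h (by simp)
  · rw [he₂, h]

noncomputable def autEquiv : (G' Γ ≃g G' Γ) ≃ (Γ ≃g Γ) where
  toFun := R
  invFun := upIso
  left_inv := fun φ => RelIso.ext fun w => by
    rcases w with x | d | e | e
    · show pO (down φ x) = φ (pO x)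
      exact (down_spec φ x).symm
    · show pP (dartMap (R φ) d) = φ (pP d)
      exact (phi_pP φ d).symm
    · show pM ((R φ).mapEdgeSet e) = φ (pM e)
      exact (phi_pM φ e).symm
    · show pD ((R φ).mapEdgeSet e) = φ (pD e)
      exact (phi_pD φ e).symm
  right_inv := fun ψ => RelIso.ext fun x => by
    have h := down_spec (upIso ψ) x
    rw [show (upIso ψ) (pO x) = pO (ψ x) from rfl] at h
    exact (Sum.inl_injective h).symm

lemma autEquiv_trans (f g : G' Γ ≃g G' Γ) :
    (autEquiv (f.trans g) : Γ ≃g Γ) = (autEquiv f).trans (autEquiv g) := by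
  refine RelIso.ext fun x => ?_
  refine Sum.inl_injective (α := V) (β := Γ.Dart ⊕ (Γ.edgeSet ⊕ Γ.edgeSet)) ?_
  show pO (down (f.trans g) x) = pO (down g (down f x))
  calc pO (down (f.trans g) x) = (f.trans g) (pO x) := (down_spec _ _).symm
    _ = g (f (pO x)) := rfl
    _ = g (pO (down f x)) := by rw [down_spec f x]
    _ = pO (down g (down f x)) := down_spec g _

end Det

section Color
variable {V : Type u} {Γ : SimpleGraph V}

def rk : W Γ → Fin 3
  | Sum.inl _ => 0
  | Sum.inr (Sum.inl _) => 1
  | Sum.inr (Sum.inr _) => 2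

def col : Sym2 (W Γ) → Fin 3 :=
  Sym2.lift ⟨fun v w => min (rk v) (rk w), fun v w => min_comm _ _⟩

lemma col_mk (v w : W Γ) : col s(v, w) = min (rk v) (rk w) := rfl

lemma rk_map (φ : G' Γ ≃g G' Γ) (v : W Γ) : rk (φ v) = rk v := by
  rcases v with x | d | e | e
  · rw [down_spec]; rfl
  · rw [phi_pP]; rfl
  · rw [phi_pM]; rfl
  · rw [phi_pD]; rfl

lemma col_invariant (φ : G' Γ ≃g G' Γ) (v w : W Γ) :
    col s(φ v, φ w) = col s(v, w) := by
  rw [col_mk, col_mk, rk_map, rk_map]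

lemma rk_pO (x : V) : rk (pO x : W Γ) = 0 := rfl
lemma rk_pP (d : Γ.Dart) : rk (pP d) = 1 := rfl
lemma rk_pM (e : Γ.edgeSet) : rk (pM e) = 2 := rfl
lemma rk_pD (e : Γ.edgeSet) : rk (pD e) = 2 := rfl

lemma starForest (l : Fin 3) : IsStarForest (colorSubgraph (G' Γ) col l) := by
  fin_cases l
  · -- color 0 : the O–P edges, centers are original vertices
    refine ⟨{v | ∃ x, v = pO x}, ?_, ?_⟩
    · rintro v w ⟨hadj, hcol⟩
      rw [col_mk] at hcol
      rcases v with x | d | e | e <;> rcases w with y | d' | e' | e' <;>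
        first
          | (simp only [rk_pO, rk_pP, rk_pM, rk_pD] at hcol; exact absurd hcol (by decide))
          | exact hadj.elim (fun h => h.elim) (fun h => h.elim)
          | simp
    · rintro v hv u hu u' hu'
      simp only [mem_neighborSet, colorSubgraph] at hu hu'
      rcases v with x | d | e | e
      · exact absurd ⟨x, rfl⟩ hv
      · obtain ⟨h1, h2⟩ := hu
        obtain ⟨h1', h2'⟩ := hu'
        rcases adj_pP_iff.1 h1 with rfl | rfl
        · rcases adj_pP_iff.1 h1' with rfl | rfl
          · rfl
          · rw [col_mk] at h2'
            simp only [rk_pO, rk_pP, rk_pM, rk_pD] at h2'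
            exact absurd h2' (by decide)
        · rw [col_mk] at h2
          simp only [rk_pO, rk_pP, rk_pM, rk_pD] at h2
          exact absurd h2 (by decide)
      · obtain ⟨h1, h2⟩ := hu
        rcases adj_pM_iff.1 h1 with ⟨d, rfl, -⟩ | rfl <;>
          (rw [col_mk] at h2;
           simp only [rk_pO, rk_pP, rk_pM, rk_pD] at h2;
           exact absurd h2 (by decide))
      · obtain ⟨h1, h2⟩ := hu
        rw [adj_pD_iff.1 h1, col_mk] at h2
        simp only [rk_pO, rk_pP, rk_pM, rk_pD] at h2
        exact absurd h2 (by decide)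
  · -- color 1 : the P–M edges, centers are the M vertices
    refine ⟨{v | ∃ e, v = pM e}, ?_, ?_⟩
    · rintro v w ⟨hadj, hcol⟩
      rw [col_mk] at hcol
      rcases v with x | d | e | e <;> rcases w with y | d' | e' | e' <;>
        first
          | (simp only [rk_pO, rk_pP, rk_pM, rk_pD] at hcol; exact absurd hcol (by decide))
          | exact hadj.elim (fun h => h.elim) (fun h => h.elim)
          | simp
    · rintro v hv u hu u' hu'
      simp only [mem_neighborSet, colorSubgraph] at hu hu'
      rcases v with x | d | e | e
      · obtain ⟨h1, h2⟩ := hu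
        obtain ⟨d, rfl, -⟩ := adj_pO_iff.1 h1
        rw [col_mk] at h2
        simp only [rk_pO, rk_pP, rk_pM, rk_pD] at h2
        exact absurd h2 (by decide)
      · obtain ⟨h1, h2⟩ := hu
        obtain ⟨h1', h2'⟩ := hu'
        rcases adj_pP_iff.1 h1 with rfl | rfl
        · rw [col_mk] at h2
          simp only [rk_pO, rk_pP, rk_pM, rk_pD] at h2
          exact absurd h2 (by decide)
        · rcases adj_pP_iff.1 h1' with rfl | rfl
          · rw [col_mk] at h2'
            simp only [rk_pO, rk_pP, rk_pM, rk_pD] at h2'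
            exact absurd h2' (by decide)
          · rfl
      · exact absurd ⟨e, rfl⟩ hv
      · obtain ⟨h1, h2⟩ := hu
        rw [adj_pD_iff.1 h1, col_mk] at h2
        simp only [rk_pO, rk_pP, rk_pM, rk_pD] at h2
        exact absurd h2 (by decide)
  · -- color 2 : the M–D edges, centers are the M vertices
    refine ⟨{v | ∃ e, v = pM e}, ?_, ?_⟩
    · rintro v w ⟨hadj, hcol⟩
      rw [col_mk] at hcol
      rcases v with x | d | e | e <;> rcases w with y | d' | e' | e' <;>
        first
          | (simp only [rk_pO, rk_pP, rk_pM, rk_pD] at hcol; exact absurd hcol (by decide))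
          | exact hadj.elim (fun h => h.elim) (fun h => h.elim)
          | simp
    · rintro v hv u hu u' hu'
      simp only [mem_neighborSet, colorSubgraph] at hu hu'
      rcases v with x | d | e | e
      · obtain ⟨h1, h2⟩ := hu
        obtain ⟨d, rfl, -⟩ := adj_pO_iff.1 h1
        rw [col_mk] at h2
        simp only [rk_pO, rk_pP, rk_pM, rk_pD] at h2
        exact absurd h2 (by decide)
      · obtain ⟨h1, h2⟩ := hu
        rcases adj_pP_iff.1 h1 with rfl | rfl <;>
          (rw [col_mk] at h2;
           simp only [rk_pO, rk_pP, rk_pM, rk_pD] at h2;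
           exact absurd h2 (by decide))
      · exact absurd ⟨e, rfl⟩ hv
      · obtain ⟨h1, h2⟩ := hu
        obtain ⟨h1', h2'⟩ := hu'
        rw [adj_pD_iff.1 h1, adj_pD_iff.1 h1']
end Color

section Conn
variable {V : Type u} {Γ : SimpleGraph V}

lemma reach_adj {x y : V} (h : Γ.Adj x y) : (G' Γ).Reachable (pO x) (pO y) := by
  have h1 : (G' Γ).Adj (pO x) (pP ⟨(x, y), h⟩) := Or.inl rfl
  have h2 : (G' Γ).Adj (pP ⟨(x, y), h⟩) (pM ⟨s(x, y), h⟩) := Or.inl rfl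
  have h3 : (G' Γ).Adj (pM ⟨s(x, y), h⟩) (pP ⟨(y, x), h.symm⟩) :=
    Or.inr (by show s(y, x) = s(x, y); rw [Sym2.eq_swap])
  have h4 : (G' Γ).Adj (pP ⟨(y, x), h.symm⟩) (pO y) := Or.inr rfl
  exact ((h1.reachable.trans h2.reachable).trans h3.reachable).trans h4.reachable

lemma reach_pO_of_reach {x y : V} (h : Γ.Reachable x y) :
    (G' Γ).Reachable (pO x) (pO y) := by
  refine h.elim fun p => ?_
  clear h
  induction p with
  | nil => exact Reachable.refl _
  | cons h p ih => exact (reach_adj h).trans ih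

lemma reach_to_pO (v : W Γ) : ∃ x, (G' Γ).Reachable v (pO x) := by
  rcases v with x | d | e | e
  · exact ⟨x, Reachable.refl _⟩
  · have h1 : (G' Γ).Adj (pP d) (pO d.fst) := Or.inr rfl
    exact ⟨d.fst, h1.reachable⟩
  · obtain ⟨d, hd⟩ := exists_dart e
    have h1 : (G' Γ).Adj (pM e) (pP d) := Or.inr hd
    have h2 : (G' Γ).Adj (pP d) (pO d.fst) := Or.inr rfl
    exact ⟨d.fst, h1.reachable.trans h2.reachable⟩
  · obtain ⟨d, hd⟩ := exists_dart e
    have h0 : (G' Γ).Adj (pD e) (pM e) := Or.inr rfl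
    have h1 : (G' Γ).Adj (pM e) (pP d) := Or.inr hd
    have h2 : (G' Γ).Adj (pP d) (pO d.fst) := Or.inr rfl
    exact ⟨d.fst, (h0.reachable.trans h1.reachable).trans h2.reachable⟩

lemma G'_connected (h : Γ.Connected) : (G' Γ).Connected := by
  have hne : Nonempty V := h.nonempty
  haveI : Nonempty (W Γ) := ⟨pO hne.some⟩
  refine ⟨fun u v => ?_⟩
  obtain ⟨x, hx⟩ := reach_to_pO u
  obtain ⟨y, hy⟩ := reach_to_pO v
  exact hx.trans ((reach_pO_of_reach (h.preconnected x y)).trans hy.symm)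

end Conn

section Card
variable {V : Type u} {Γ : SimpleGraph V}

noncomputable def someDart (e : Γ.edgeSet) : Γ.Dart := (exists_dart e).choose

lemma someDart_edge (e : Γ.edgeSet) : (someDart e).edge = (e : Sym2 V) :=
  (exists_dart e).choose_spec

lemma dart_card : Cardinal.mk Γ.Dart ≤ Cardinal.mk Γ.edgeSet + Cardinal.mk Γ.edgeSet := by
  have hsurj : Function.Surjective
      (Sum.elim someDart (fun e => (someDart e).symm) : Γ.edgeSet ⊕ Γ.edgeSet → Γ.Dart) := by
    intro d
    have h := someDart_edge ⟨d.edge, d.edge_mem⟩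
    rcases (dart_edge_eq_iff _ d).1 h with h2 | h2
    · exact ⟨Sum.inl ⟨d.edge, d.edge_mem⟩, h2⟩
    · refine ⟨Sum.inr ⟨d.edge, d.edge_mem⟩, ?_⟩
      show (someDart _).symm = d
      rw [h2, Dart.symm_symm]
  calc Cardinal.mk Γ.Dart ≤ Cardinal.mk (Γ.edgeSet ⊕ Γ.edgeSet) :=
        Cardinal.mk_le_of_surjective hsurj
    _ = Cardinal.mk Γ.edgeSet + Cardinal.mk Γ.edgeSet := by
        simp [Cardinal.mk_sum]

lemma card_lower : Cardinal.mk V ≤ Cardinal.mk (W Γ) :=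
  Cardinal.mk_le_of_injective (Sum.inl_injective : Function.Injective (Sum.inl : V → W Γ))

lemma card_upper : Cardinal.mk (W Γ) ≤ Cardinal.mk V + 4 * Cardinal.mk Γ.edgeSet := by
  have h1 : Cardinal.mk (W Γ) =
      Cardinal.mk V + (Cardinal.mk Γ.Dart +
        (Cardinal.mk Γ.edgeSet + Cardinal.mk Γ.edgeSet)) := by
    simp [W, Cardinal.mk_sum]
  rw [h1]
  have h2 := dart_card (Γ := Γ)
  have h3 : Cardinal.mk Γ.Dart + (Cardinal.mk Γ.edgeSet + Cardinal.mk Γ.edgeSet) ≤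
      4 * Cardinal.mk Γ.edgeSet := by
    calc Cardinal.mk Γ.Dart + (Cardinal.mk Γ.edgeSet + Cardinal.mk Γ.edgeSet)
        ≤ (Cardinal.mk Γ.edgeSet + Cardinal.mk Γ.edgeSet) +
          (Cardinal.mk Γ.edgeSet + Cardinal.mk Γ.edgeSet) := by
          exact add_le_add_left h2 _
      _ = 4 * Cardinal.mk Γ.edgeSet := by ring
  exact add_le_add_right h3 _

end Card

end StarAux

/-- There is a fixed number `N` (`N = 7` works) such that every connected graph `Γ`
admits a connected graph `Γ⁺` with: (1) `Aut(Γ⁺) ≅ Aut(Γ)`; (2) an edge coloring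
`C : E(Γ⁺) → N` such that each color class is a disjoint union of stars; (3) every
automorphism of `Γ⁺` preserves the coloring; and (4)
`|V(Γ)| ≤ |V(Γ⁺)| ≤ |V(Γ)| + 4|E(Γ)|`. -/
theorem stmt8 : ∃ N : ℕ, ∀ (V : Type u) (Γ : SimpleGraph V), Γ.Connected →
    ∃ (W : Type u) (Γ' : SimpleGraph W) (C : Sym2 W → Fin N),
      Γ'.Connected ∧
      (∃ e : (Γ' ≃g Γ') ≃ (Γ ≃g Γ), ∀ f g, e (f.trans g) = (e f).trans (e g)) ∧
      (∀ l, IsStarForest (colorSubgraph Γ' C l)) ∧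
      (∀ (φ : Γ' ≃g Γ') (v w : W), Γ'.Adj v w → C s(φ v, φ w) = C s(v, w)) ∧
      Cardinal.mk V ≤ Cardinal.mk W ∧
      Cardinal.mk W ≤ Cardinal.mk V + 4 * Cardinal.mk Γ.edgeSet := by
  refine ⟨3, fun V Γ hconn => ?_⟩
  exact ⟨StarAux.W Γ, StarAux.G' Γ, StarAux.col, StarAux.G'_connected hconn,
    ⟨StarAux.autEquiv, StarAux.autEquiv_trans⟩, StarAux.starForest,
    fun φ v w _ => StarAux.col_invariant φ v w, StarAux.card_lower, StarAux.card_upper⟩
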